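/- For any complex numbers c₀ and c₁ with c₁ ≠ 0, the four-qubit state c₀|0000⟩ + c₁(|1000⟩ + |0100⟩ + |0010⟩ + |0001⟩) is SLOCC-equivalent to the four-qubit W state |1000⟩ + |0100⟩ + |0010⟩ + |0001⟩. -/

import Mathlib

/-- The four-qubit W state: coefficient `1` on every basis vector with exactly one
index equal to `1`, and `0` elsewhere. -/
noncomputable def W4 : (Fin 4 → Fin 2) → ℂ :=
  fun f => if (Finset.univ.filter fun k => f k = 1).card = 1 then 1 else 0

def e4 : (Fin 2 × Fin 2 × Fin 2 × Fin 2) ≃ (Fin 4 → Fin 2) where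
  toFun p := ![p.1, p.2.1, p.2.2.1, p.2.2.2]
  invFun g := (g 0, g 1, g 2, g 3)
  left_inv := by rintro ⟨a, b, c, d⟩; simp
  right_inv := by
    intro g; funext i; fin_cases i <;> simp

lemma sum_pi4 (F : (Fin 4 → Fin 2) → ℂ) :
    ∑ g : Fin 4 → Fin 2, F g =
      ∑ a : Fin 2, ∑ b : Fin 2, ∑ c : Fin 2, ∑ d : Fin 2, F ![a, b, c, d] := by
  rw [← Equiv.sum_comp e4 F]
  simp [Fintype.sum_prod_type, e4]

set_option maxHeartbeats 2000000 in
/-- For `c₁ ≠ 0`, the state `c₀|0000⟩ + c₁(|1000⟩ + |0100⟩ + |0010⟩ + |0001⟩)` is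
SLOCC-equivalent to the four-qubit W state. -/
theorem c0_plus_c1_w4_slocc_equiv_w4 (c₀ c₁ : ℂ) (hc₁ : c₁ ≠ 0)
    (ψ : (Fin 4 → Fin 2) → ℂ)
    (hψ : ∀ f : Fin 4 → Fin 2,
      ψ f = if ∀ k, f k = 0 then c₀
        else if (Finset.univ.filter fun k => f k = 1).card = 1 then c₁ else 0) :
    ∃ A : Fin 4 → Matrix (Fin 2) (Fin 2) ℂ,
      (∀ k, IsUnit (A k)) ∧
      ∀ f : Fin 4 → Fin 2,
        W4 f = ∑ g : Fin 4 → Fin 2, (∏ k, A k (f k) (g k)) * ψ g := by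
  refine ⟨![!![c₁⁻¹, -c₀ * c₁⁻¹ * c₁⁻¹; 0, c₁⁻¹], !![1, 0; 0, 1], !![1, 0; 0, 1],
      !![1, 0; 0, 1]], ?_, ?_⟩
  · intro k
    fin_cases k <;>
      simp [Matrix.isUnit_iff_isUnit_det, Matrix.det_fin_two_of, hc₁]
  · intro f
    have h0 : f 0 = 0 ∨ f 0 = 1 := by omega
    have h1 : f 1 = 0 ∨ f 1 = 1 := by omega
    have h2 : f 2 = 0 ∨ f 2 = 1 := by omega
    have h3 : f 3 = 0 ∨ f 3 = 1 := by omega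
    rw [sum_pi4]
    rcases h0 with h0 | h0 <;> rcases h1 with h1 | h1 <;>
      rcases h2 with h2 | h2 <;> rcases h3 with h3 | h3 <;>
    · simp only [W4, hψ, Fin.sum_univ_two, Fin.prod_univ_four, Finset.card_filter,
        Fin.sum_univ_four, h0, h1, h2, h3, Fin.forall_fin_succ, Fin.forall_fin_zero_pi,
        Matrix.cons_val_zero, Matrix.cons_val_one, Matrix.head_cons, Matrix.cons_val_two,
        Matrix.tail_cons, Matrix.cons_val_three, Matrix.of_apply, Matrix.cons_val_succ]
      norm_num
      try field_simp
      try ring
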